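/- For 2 ≤ i ≤ 4, the multiplicative orders of c_i and of a_i both equal ∏_{j=1}^{i} N_j; and for every i ≥ 5, the multiplicative orders of c_i and of a_i are both at least ∏_{j=1}^{4} N_j · ∏_{j=5}^{i} (2^(j+2) + 1). -/
import Mathlib


/-- The `j`-th Fermat number `N_j = 2^(2^j) + 1`. -/
def fermatN (j : ℕ) : ℕ := 2 ^ 2 ^ j + 1

/-- `conwayL c n` is the subfield `L_{n-1}` of the algebraic closure of `F_2`
generated over `F_2` by `c 0, …, c (n-1)`; in particular `conwayL c 0 = ⊥ = F_2`. -/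
noncomputable def conwayL (c : ℕ → AlgebraicClosure (ZMod 2)) (n : ℕ) :
    IntermediateField (ZMod 2) (AlgebraicClosure (ZMod 2)) :=
  IntermediateField.adjoin (ZMod 2) (c '' Set.Iio n)
namespace ConwayAux

open Polynomial IntermediateField

local notation "AC" => AlgebraicClosure (ZMod 2)

instance : CharP AC 2 := charP_of_injective_algebraMap (algebraMap (ZMod 2) AC).injective 2

lemma two_eq_zero : (2 : AC) = 0 := by exact_mod_cast CharP.cast_eq_zero AC 2

/-- `bb c n = ∏_{j<n} c j`; so `bb c (n+1)` is `a_n`. -/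
noncomputable def bb (c : ℕ → AC) (n : ℕ) : AC := ∏ j ∈ Finset.range n, c j

variable {c : ℕ → AC}

lemma heq (hc0 : c 0 ^ 2 + c 0 + 1 = 0)
    (hrec : ∀ i : ℕ, c (i + 1) ^ 2 + c (i + 1) + ∏ j ∈ Finset.range (i + 1), c j = 0)
    (n : ℕ) : c n ^ 2 + c n + bb c n = 0 := by
  cases n with
  | zero => simpa [bb] using hc0
  | succ n => exact hrec n

lemma c_mem {j n : ℕ} (h : j < n) : c j ∈ conwayL c n :=
  IntermediateField.subset_adjoin _ _ ⟨j, h, rfl⟩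

lemma bb_mem (n : ℕ) : bb c n ∈ conwayL c n :=
  prod_mem fun j hj => c_mem (Finset.mem_range.mp hj)

lemma conwayL_zero : conwayL c 0 = ⊥ := by
  rw [conwayL]
  have : c '' Set.Iio 0 = ∅ := by ext x; simp
  rw [this, IntermediateField.adjoin_empty]

lemma c0_ne_zero (hc0 : c 0 ^ 2 + c 0 + 1 = 0) : c 0 ≠ 0 := by
  intro h; rw [h] at hc0; simp at hc0

lemma c0_ne_one (hc0 : c 0 ^ 2 + c 0 + 1 = 0) : c 0 ≠ 1 := by
  intro h; rw [h] at hc0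
  have h2 : (2 : AC) = 0 := two_eq_zero
  have : (1 : AC) = 0 := by linear_combination hc0 - h2 - (1 : AC) * h2 + h2
  simp at this

lemma hnotc (hc0 : c 0 ^ 2 + c 0 + 1 = 0)
    (hnot : ∀ i : ℕ, c (i + 1) ∉ conwayL c (i + 1)) (n : ℕ) :
    c n ∉ conwayL c n := by
  cases n with
  | succ n => exact hnot n
  | zero =>
    rw [conwayL_zero]
    intro hmem
    rw [IntermediateField.mem_bot] at hmem
    obtain ⟨y, hy⟩ := hmem
    have hy2 : ∀ z : ZMod 2, z = 0 ∨ z = 1 := by decide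
    rcases hy2 y with h | h <;> rw [h] at hy
    · exact c0_ne_zero hc0 (by simpa using hy.symm)
    · exact c0_ne_one hc0 (by simpa using hy.symm)

set_option maxHeartbeats 1000000 in
set_option synthInstance.maxHeartbeats 400000 in
lemma card_step {n : ℕ} {b : AC} (hb : b ∈ conwayL c n)
    (hnotcn : c n ∉ conwayL c n) (ih : Nat.card (conwayL c n) = 2 ^ 2 ^ n)
    (he : c n ^ 2 + c n + b = 0) :
    Nat.card (conwayL c (n + 1)) = 2 ^ 2 ^ (n + 1) := by
  have hset : (conwayL c (n+1) : Set AC)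
      = ((IntermediateField.adjoin (conwayL c n) {c n}).restrictScalars (ZMod 2) : Set AC) := by
    have h1 : (IntermediateField.adjoin (conwayL c n) {c n}).restrictScalars (ZMod 2)
        = IntermediateField.adjoin (ZMod 2) ((c '' Set.Iio n) ∪ {c n}) := by
      unfold conwayL
      exact IntermediateField.adjoin_adjoin_left (F := ZMod 2)
        (E := AlgebraicClosure (ZMod 2)) (c '' Set.Iio n) {c n}
    have h2 : (c '' Set.Iio n) ∪ {c n} = c '' Set.Iio (n+1) := by
      ext x
      simp only [Set.mem_image, Set.mem_Iio, Set.union_singleton, Set.mem_insert_iff]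
      constructor
      · rintro (rfl | ⟨j, hj, rfl⟩)
        · exact ⟨n, Nat.lt_succ_self n, rfl⟩
        · exact ⟨j, Nat.lt_succ_of_lt hj, rfl⟩
      · rintro ⟨j, hj, rfl⟩
        rcases Nat.lt_succ_iff_lt_or_eq.mp hj with h | h
        · exact Or.inr ⟨j, h, rfl⟩
        · exact Or.inl (by rw [h])
    rw [h1, h2]; rfl
  set K := conwayL c n with hK
  clear_value K
  set β : K := ⟨b, hb⟩ with hβ
  set P : Polynomial K := X ^ 2 + X + C β with hP
  have hdlt : (X + C β : Polynomial K).degree < (2:ℕ) := by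
    rw [degree_X_add_C]; norm_num
  have hmonic : P.Monic := by
    have := monic_X_pow_add (n := 2) hdlt
    simpa [hP, add_assoc] using this
  have haev : Polynomial.aeval (c n) P = 0 := by
    simp only [hP, map_add, map_pow, aeval_X, aeval_C]
    have : (algebraMap K AC) β = b := rfl
    rw [this]; exact he
  have hint : IsIntegral K (c n) := ⟨P, hmonic, haev⟩
  have hdvd := minpoly.dvd K (c n) haev
  have hPdeg : P.natDegree = 2 := by
    have hd : P.degree = 2 := by
      rw [hP, add_assoc]
      rw [degree_add_eq_left_of_degree_lt (by simpa using hdlt)]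
      exact degree_X_pow 2
    exact natDegree_eq_of_degree_eq_some hd
  have hdeg2 : (minpoly K (c n)).natDegree = 2 := by
    have hle := Polynomial.natDegree_le_of_dvd hdvd hmonic.ne_zero
    rw [hPdeg] at hle
    have hge : 2 ≤ (minpoly K (c n)).natDegree := by
      rw [minpoly.two_le_natDegree_iff hint]
      rintro ⟨y, hy⟩
      exact hnotcn (hy ▸ y.2)
    omega
  have hfinrank : Module.finrank K K⟮(c n)⟯ = 2 := by
    rw [adjoin.finrank hint, hdeg2]
  have hKfin : Finite K := Nat.finite_of_card_ne_zero (by rw [ih]; positivity)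
  have hFD : FiniteDimensional K K⟮(c n)⟯ := adjoin.finiteDimensional hint
  have hVfin : Finite K⟮(c n)⟯ := Module.finite_of_finite K
  letI : Fintype K := Fintype.ofFinite K
  letI : Fintype K⟮(c n)⟯ := Fintype.ofFinite _
  have hcard : Fintype.card K⟮(c n)⟯ = Fintype.card K ^ 2 := by
    rw [Module.card_eq_pow_finrank (K := K) (V := K⟮(c n)⟯), hfinrank]
  have hnc : Nat.card (conwayL c (n+1)) = Nat.card K⟮(c n)⟯ :=
    Nat.card_congr (Equiv.setCongr (by rw [hset]; rfl))
  rw [hnc, Nat.card_eq_fintype_card, hcard, ← Nat.card_eq_fintype_card, ih]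
  rw [← pow_mul, ← pow_succ]

lemma card_L (hc0 : c 0 ^ 2 + c 0 + 1 = 0)
    (hrec : ∀ i : ℕ, c (i + 1) ^ 2 + c (i + 1) + ∏ j ∈ Finset.range (i + 1), c j = 0)
    (hnot : ∀ i : ℕ, c (i + 1) ∉ conwayL c (i + 1)) :
    ∀ n, Nat.card (conwayL c n) = 2 ^ 2 ^ n := by
  intro n
  induction n with
  | zero =>
    rw [conwayL_zero]
    rw [Nat.card_congr (IntermediateField.botEquiv (ZMod 2) AC).toEquiv]
    simp [Nat.card_eq_fintype_card]
  | succ n ih =>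
    exact card_step (bb_mem n) (hnotc hc0 hnot n) ih (heq hc0 hrec n)

lemma pow_card_of_mem {n : ℕ} {x : AC} (hx : x ∈ conwayL c n)
    (hcard : Nat.card (conwayL c n) = 2 ^ 2 ^ n) : x ^ 2 ^ 2 ^ n = x := by
  have hfin : Finite (conwayL c n) := Nat.finite_of_card_ne_zero (by rw [hcard]; positivity)
  letI : Fintype (conwayL c n) := Fintype.ofFinite _
  have h := FiniteField.pow_card (⟨x, hx⟩ : conwayL c n)
  have hc : Fintype.card (conwayL c n) = 2 ^ 2 ^ n := by
    rw [← Nat.card_eq_fintype_card, hcard]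
  rw [hc] at h
  have := congrArg (fun y : conwayL c n => (y : AC)) h
  simpa using this

lemma mem_of_pow_card {n : ℕ} (hcard : Nat.card (conwayL c n) = 2 ^ 2 ^ n) {x : AC}
    (hx : x ^ 2 ^ 2 ^ n = x) : x ∈ conwayL c n := by
  set q := 2 ^ 2 ^ n with hq
  have hq2 : 2 ≤ q := by
    rw [hq]; exact Nat.one_lt_two_pow_iff.mpr (by positivity)
  classical
  set p : Polynomial AC := X ^ q - X with hp
  have hmon : p.Monic := by
    rw [hp]
    exact monic_X_pow_sub (by rw [degree_X]; exact_mod_cast (by omega : (1:ℕ) < q))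
  have hpne : p ≠ 0 := hmon.ne_zero
  have hsub : (conwayL c n : Set AC) ⊆ {y : AC | y ^ q = y} :=
    fun y hy => pow_card_of_mem hy hcard
  have hSsub : {y : AC | y ^ q = y} ⊆ ↑(p.roots.toFinset) := by
    intro y hy
    simp only [Finset.coe_sort_coe, Finset.mem_coe, Multiset.mem_toFinset]
    rw [mem_roots hpne]
    simp only [hp, IsRoot, eval_sub, eval_pow, eval_X, sub_eq_zero]
    exact hy
  have hfinS : ({y : AC | y ^ q = y}).Finite :=
    Set.Finite.subset (p.roots.toFinset.finite_toSet) hSsub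
  have hcardS : ({y : AC | y ^ q = y}).ncard ≤ q := by
    calc ({y : AC | y ^ q = y}).ncard ≤ p.roots.toFinset.card := by
          rw [← Set.ncard_coe_finset]
          exact Set.ncard_le_ncard hSsub (p.roots.toFinset.finite_toSet)
      _ ≤ Multiset.card p.roots := Multiset.toFinset_card_le _
      _ ≤ p.natDegree := Polynomial.card_roots' p
      _ ≤ q := by
          refine le_trans (Polynomial.natDegree_sub_le _ _) ?_
          simp only [Polynomial.natDegree_X_pow, Polynomial.natDegree_X]
          omega
  have hLcard : (conwayL c n : Set AC).ncard = q := by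
    rw [← Nat.card_coe_set_eq]
    exact hcard
  have hEq : (conwayL c n : Set AC) = {y : AC | y ^ q = y} :=
    Set.eq_of_subset_of_ncard_le hsub (by rw [hLcard]; exact hcardS) hfinS
  have : x ∈ {y : AC | y ^ q = y} := hx
  rw [← hEq] at this
  exact this

lemma frobC (hc0 : c 0 ^ 2 + c 0 + 1 = 0)
    (hrec : ∀ i : ℕ, c (i + 1) ^ 2 + c (i + 1) + ∏ j ∈ Finset.range (i + 1), c j = 0)
    (hnot : ∀ i : ℕ, c (i + 1) ∉ conwayL c (i + 1)) (n : ℕ) :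
    c n ^ 2 ^ 2 ^ n = c n + 1 := by
  have h2 : (2 : AC) = 0 := two_eq_zero
  have hcards := card_L hc0 hrec hnot
  have hb : bb c n ^ 2 ^ 2 ^ n = bb c n := pow_card_of_mem (bb_mem n) (hcards n)
  have he := heq hc0 hrec n
  have hy : (c n ^ 2 ^ 2 ^ n) ^ 2 + c n ^ 2 ^ 2 ^ n + bb c n = 0 := by
    have h3 := congrArg (iterateFrobenius AC 2 (2 ^ n)) he
    simp only [map_add, map_pow, map_zero, map_one, iterateFrobenius_def] at h3
    rwa [hb] at h3
  have hfac : (c n ^ 2 ^ 2 ^ n + c n) * (c n ^ 2 ^ 2 ^ n + c n + 1) = 0 := by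
    linear_combination hy + he + (c n ^ 2 ^ 2 ^ n * c n - bb c n) * h2
  rcases mul_eq_zero.mp hfac with h | h
  · exfalso
    have hfix : c n ^ 2 ^ 2 ^ n = c n := by linear_combination h - c n * h2
    exact hnotc hc0 hnot n (mem_of_pow_card (hcards n) hfix)
  · linear_combination h - (c n + 1) * h2

lemma key_pow (hc0 : c 0 ^ 2 + c 0 + 1 = 0)
    (hrec : ∀ i : ℕ, c (i + 1) ^ 2 + c (i + 1) + ∏ j ∈ Finset.range (i + 1), c j = 0)
    (hnot : ∀ i : ℕ, c (i + 1) ∉ conwayL c (i + 1)) (n : ℕ) :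
    c n ^ fermatN n = bb c n := by
  have h2 : (2 : AC) = 0 := two_eq_zero
  have he := heq hc0 hrec n
  have hf := frobC hc0 hrec hnot n
  rw [fermatN, pow_succ, hf]
  linear_combination he - bb c n * h2

lemma ne_zero (hc0 : c 0 ^ 2 + c 0 + 1 = 0)
    (hrec : ∀ i : ℕ, c (i + 1) ^ 2 + c (i + 1) + ∏ j ∈ Finset.range (i + 1), c j = 0) :
    ∀ n, bb c n ≠ 0 ∧ c n ≠ 0 := by
  intro n
  induction n with
  | zero =>
    refine ⟨by simp [bb], c0_ne_zero hc0⟩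
  | succ n ih =>
    have hb1 : bb c (n + 1) ≠ 0 := by
      have : bb c (n + 1) = bb c n * c n := Finset.prod_range_succ _ _
      rw [this]
      exact mul_ne_zero ih.1 ih.2
    refine ⟨hb1, ?_⟩
    intro h0
    have he := heq hc0 hrec (n + 1)
    rw [h0] at he
    simp at he
    exact hb1 he

lemma orderOf_dvd_of_mem (hc0 : c 0 ^ 2 + c 0 + 1 = 0)
    (hrec : ∀ i : ℕ, c (i + 1) ^ 2 + c (i + 1) + ∏ j ∈ Finset.range (i + 1), c j = 0)
    (hnot : ∀ i : ℕ, c (i + 1) ∉ conwayL c (i + 1))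
    {n : ℕ} {x : AC} (hx : x ∈ conwayL c n) (hx0 : x ≠ 0) :
    orderOf x ∣ 2 ^ 2 ^ n - 1 := by
  have h1 : x ^ 2 ^ 2 ^ n = x := pow_card_of_mem hx (card_L hc0 hrec hnot n)
  apply orderOf_dvd_of_pow_eq_one
  have hq : 1 ≤ 2 ^ 2 ^ n := Nat.one_le_two_pow
  have h3 : x ^ (2 ^ 2 ^ n - 1) * x = 1 * x := by
    rw [one_mul, ← pow_succ, Nat.sub_add_cancel hq]
    exact h1
  exact mul_right_cancel₀ hx0 h3

lemma orderOf_c0 (hc0 : c 0 ^ 2 + c 0 + 1 = 0) : orderOf (c 0) = 3 := by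
  haveI : Fact (Nat.Prime 3) := ⟨by norm_num⟩
  have h3 : c 0 ^ 3 = 1 := by linear_combination (c 0 - 1) * hc0
  exact orderOf_eq_prime h3 (c0_ne_one hc0)

/-- `e n = D n * gcd (e n) (N n)`. -/
lemma rel1 (hc0 : c 0 ^ 2 + c 0 + 1 = 0)
    (hrec : ∀ i : ℕ, c (i + 1) ^ 2 + c (i + 1) + ∏ j ∈ Finset.range (i + 1), c j = 0)
    (hnot : ∀ i : ℕ, c (i + 1) ∉ conwayL c (i + 1)) (n : ℕ) :
    orderOf (bb c n) * Nat.gcd (orderOf (c n)) (fermatN n) = orderOf (c n) := by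
  have h := key_pow hc0 hrec hnot n
  have h1 : orderOf (bb c n) = orderOf (c n) / Nat.gcd (orderOf (c n)) (fermatN n) := by
    rw [← h, orderOf_pow' _ (by simp [fermatN])]
  rw [h1, Nat.div_mul_cancel (Nat.gcd_dvd_left _ _)]

/-- The gcd from `rel1` is nontrivial. -/
lemma rel2 (hc0 : c 0 ^ 2 + c 0 + 1 = 0)
    (hrec : ∀ i : ℕ, c (i + 1) ^ 2 + c (i + 1) + ∏ j ∈ Finset.range (i + 1), c j = 0)
    (hnot : ∀ i : ℕ, c (i + 1) ∉ conwayL c (i + 1)) (n : ℕ) :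
    Nat.gcd (orderOf (c n)) (fermatN n) ≠ 1 := by
  intro hg1
  have hDdvd : orderOf (bb c n) ∣ 2 ^ 2 ^ n - 1 :=
    orderOf_dvd_of_mem hc0 hrec hnot (bb_mem n) (ne_zero hc0 hrec n).1
  have he : orderOf (c n) = orderOf (bb c n) := by
    have := rel1 hc0 hrec hnot n
    rw [hg1, mul_one] at this
    exact this.symm
  have hedvd : orderOf (c n) ∣ 2 ^ 2 ^ n - 1 := he ▸ hDdvd
  have hpow : c n ^ (2 ^ 2 ^ n - 1) = 1 := orderOf_dvd_iff_pow_eq_one.mp hedvd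
  have hq : 1 ≤ 2 ^ 2 ^ n := Nat.one_le_two_pow
  have hfix : c n ^ 2 ^ 2 ^ n = c n := by
    calc c n ^ 2 ^ 2 ^ n = c n ^ (2 ^ 2 ^ n - 1) * c n := by
          rw [← pow_succ, Nat.sub_add_cancel hq]
      _ = c n := by rw [hpow, one_mul]
  have hfrob := frobC hc0 hrec hnot n
  rw [hfix] at hfrob
  have : (1 : AC) = 0 := by linear_combination -hfrob
  simp at this

/-- `D (n+1) = e n / gcd (e n) (N n + 1)`. -/
lemma rel3 (hc0 : c 0 ^ 2 + c 0 + 1 = 0)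
    (hrec : ∀ i : ℕ, c (i + 1) ^ 2 + c (i + 1) + ∏ j ∈ Finset.range (i + 1), c j = 0)
    (hnot : ∀ i : ℕ, c (i + 1) ∉ conwayL c (i + 1)) (n : ℕ) :
    orderOf (bb c (n + 1)) = orderOf (c n) / Nat.gcd (orderOf (c n)) (fermatN n + 1) := by
  have hb : bb c (n + 1) = c n ^ (fermatN n + 1) := by
    rw [pow_succ, key_pow hc0 hrec hnot n, bb, Finset.prod_range_succ]
    rfl
  rw [hb, orderOf_pow' _ (by simp)]

lemma three_not_dvd_fermatN {n : ℕ} (hn : 1 ≤ n) : ¬ 3 ∣ fermatN n := by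
  obtain ⟨m, rfl⟩ := Nat.exists_eq_add_of_le hn
  intro h
  have h1 : 2 ^ 2 ^ (1 + m) % 3 = 1 := by
    rw [pow_add, pow_one, pow_mul]
    rw [Nat.pow_mod]
    norm_num
  rw [fermatN] at h
  omega

/-- If `3 ∤ e n` (`n ≥ 1`), then `gcd (e n) (N n + 1) = 1`. -/
lemma gcd_eq_one (hc0 : c 0 ^ 2 + c 0 + 1 = 0)
    (hrec : ∀ i : ℕ, c (i + 1) ^ 2 + c (i + 1) + ∏ j ∈ Finset.range (i + 1), c j = 0)
    (hnot : ∀ i : ℕ, c (i + 1) ∉ conwayL c (i + 1)) {n : ℕ}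
    (h3 : ¬ 3 ∣ orderOf (c n)) :
    Nat.gcd (orderOf (c n)) (fermatN n + 1) = 1 := by
  by_contra hg
  set g := Nat.gcd (orderOf (c n)) (fermatN n + 1) with hgdef
  have hp : (Nat.minFac g).Prime := Nat.minFac_prime hg
  set r := Nat.minFac g with hrdef
  have hre : r ∣ orderOf (c n) := (Nat.minFac_dvd g).trans (Nat.gcd_dvd_left _ _)
  have hrN1 : r ∣ fermatN n + 1 := (Nat.minFac_dvd g).trans (Nat.gcd_dvd_right _ _)
  have hedvd : orderOf (c n) ∣ (2 ^ 2 ^ n - 1) * fermatN n := by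
    rw [← rel1 hc0 hrec hnot n]
    exact Nat.mul_dvd_mul
      (orderOf_dvd_of_mem hc0 hrec hnot (bb_mem n) (ne_zero hc0 hrec n).1)
      (Nat.gcd_dvd_right _ _)
  have hrprod : r ∣ (2 ^ 2 ^ n - 1) * fermatN n := hre.trans hedvd
  rcases (Nat.Prime.dvd_mul hp).mp hrprod with h | h
  · have h3' : r ∣ 3 := by
      have hq : 1 ≤ 2 ^ 2 ^ n := Nat.one_le_two_pow
      have : fermatN n + 1 - (2 ^ 2 ^ n - 1) = 3 := by
        rw [fermatN]; omega
      calc r ∣ fermatN n + 1 - (2 ^ 2 ^ n - 1) := Nat.dvd_sub hrN1 h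
        _ = 3 := this
    have hr3 : r = 3 := (Nat.prime_dvd_prime_iff_eq hp (by norm_num)).mp h3'
    exact h3 (hr3 ▸ hre)
  · have h1 : r ∣ 1 := by
      have := Nat.dvd_sub hrN1 h
      simpa using this
    exact hp.ne_one (Nat.dvd_one.mp h1)

lemma divisor_lb {n g : ℕ} (hn : 2 ≤ n) (hgd : g ∣ fermatN n) (hg1 : g ≠ 1) :
    2 ^ (n + 2) + 1 ≤ g := by
  have hp : (Nat.minFac g).Prime := Nat.minFac_prime hg1
  have hpd : Nat.minFac g ∣ fermatN n := (Nat.minFac_dvd g).trans hgd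
  obtain ⟨k, hk⟩ := Nat.fermat_primeFactors_one_lt n (Nat.minFac g) (by omega) hp hpd
  have hk0 : k ≠ 0 := by
    rintro rfl
    rw [hk] at hp
    simp at hp
    exact Nat.not_prime_one hp
  have hple : 2 ^ (n + 2) + 1 ≤ Nat.minFac g := by
    rw [hk]
    have h2 : 2 ^ (n + 2) ≤ k * 2 ^ (n + 2) :=
      Nat.le_mul_of_pos_left _ (Nat.pos_of_ne_zero hk0)
    exact Nat.add_le_add_right h2 1
  have hg0 : g ≠ 0 := by
    rintro rfl
    rw [Nat.zero_dvd, fermatN] at hgd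
    simp at hgd
  exact hple.trans (Nat.minFac_le (Nat.pos_of_ne_zero hg0))

end ConwayAux

/-- For `2 ≤ i ≤ 4`, the multiplicative orders of `c_i` and of
`a_i = ∏_{j=0}^{i} c_j` both equal `∏_{j=1}^{i} N_j`; and for every `i ≥ 5`,
they are both at least `∏_{j=1}^{4} N_j · ∏_{j=5}^{i} (2^(j+2) + 1)`. -/
theorem conway_order_bounds (c : ℕ → AlgebraicClosure (ZMod 2))
    (hc0 : c 0 ^ 2 + c 0 + 1 = 0)
    (hrec : ∀ i : ℕ, c (i + 1) ^ 2 + c (i + 1) + ∏ j ∈ Finset.range (i + 1), c j = 0)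
    (hnot : ∀ i : ℕ, c (i + 1) ∉ conwayL c (i + 1))
    (i : ℕ) :
    (2 ≤ i → i ≤ 4 →
      orderOf (c i) = ∏ j ∈ Finset.Icc 1 i, fermatN j ∧
      orderOf (∏ j ∈ Finset.range (i + 1), c j) = ∏ j ∈ Finset.Icc 1 i, fermatN j) ∧
    (5 ≤ i →
      (∏ j ∈ Finset.Icc 1 4, fermatN j) * ∏ j ∈ Finset.Icc 5 i, (2 ^ (j + 2) + 1)
        ≤ orderOf (c i) ∧
      (∏ j ∈ Finset.Icc 1 4, fermatN j) * ∏ j ∈ Finset.Icc 5 i, (2 ^ (j + 2) + 1)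
        ≤ orderOf (∏ j ∈ Finset.range (i + 1), c j)) := by
  have hbb : ∀ n : ℕ, (∏ j ∈ Finset.range n, c j) = ConwayAux.bb c n := fun n => rfl
  have hgP : ∀ n : ℕ, (fermatN n).Prime →
      Nat.gcd (orderOf (c n)) (fermatN n) = fermatN n := by
    intro n hp
    rcases hp.eq_one_or_self_of_dvd _ (Nat.gcd_dvd_right _ _) with h | h
    · exact absurd h (ConwayAux.rel2 hc0 hrec hnot n)
    · exact h
  have hD1 : orderOf (ConwayAux.bb c 1) = 3 := by
    have h1 : ConwayAux.bb c 1 = c 0 := by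
      unfold ConwayAux.bb; exact Finset.prod_range_one c
    rw [h1]
    exact ConwayAux.orderOf_c0 hc0
  have he1 : orderOf (c 1) = 15 := by
    have h := ConwayAux.rel1 hc0 hrec hnot 1
    rw [hD1, hgP 1 (by norm_num [fermatN])] at h
    rw [← h]; norm_num [fermatN]
  have hD2 : orderOf (ConwayAux.bb c 2) = 5 := by
    rw [ConwayAux.rel3 hc0 hrec hnot 1, he1]
    norm_num [fermatN]
  have he2 : orderOf (c 2) = 85 := by
    have h := ConwayAux.rel1 hc0 hrec hnot 2
    rw [hD2, hgP 2 (by norm_num [fermatN])] at h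
    rw [← h]; norm_num [fermatN]
  have hD3 : orderOf (ConwayAux.bb c 3) = 85 := by
    rw [ConwayAux.rel3 hc0 hrec hnot 2, he2]
    norm_num [fermatN]
  have he3 : orderOf (c 3) = 21845 := by
    have h := ConwayAux.rel1 hc0 hrec hnot 3
    rw [hD3, hgP 3 (by norm_num [fermatN])] at h
    rw [← h]; norm_num [fermatN]
  have hD4 : orderOf (ConwayAux.bb c 4) = 21845 := by
    rw [ConwayAux.rel3 hc0 hrec hnot 3, he3]
    norm_num [fermatN]
  have he4 : orderOf (c 4) = 1431655765 := by
    have h := ConwayAux.rel1 hc0 hrec hnot 4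
    rw [hD4, hgP 4 (by norm_num [fermatN])] at h
    rw [← h]; norm_num [fermatN]
  have hD5 : orderOf (ConwayAux.bb c 5) = 1431655765 := by
    rw [ConwayAux.rel3 hc0 hrec hnot 4, he4]
    norm_num [fermatN]
  have h3p : Nat.Prime 3 := by norm_num
  -- invariant for i ≥ 4
  have hinv : ∀ m : ℕ,
      ((∏ j ∈ Finset.Icc 1 4, fermatN j) *
          ∏ j ∈ Finset.Icc 5 (4 + m), (2 ^ (j + 2) + 1) ≤ orderOf (c (4 + m))) ∧
        orderOf (ConwayAux.bb c (4 + m + 1)) = orderOf (c (4 + m)) ∧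
        ¬ 3 ∣ orderOf (c (4 + m)) := by
    intro m
    induction m with
    | zero =>
      refine ⟨?_, ?_, ?_⟩
      · rw [he4, show Finset.Icc 5 (4 + 0) = (∅ : Finset ℕ) from by decide,
          Finset.prod_empty, mul_one, show (∏ j ∈ Finset.Icc 1 4, fermatN j) = 1431655765
            from by decide]
      · rw [hD5, he4]
      · rw [he4]; norm_num
    | succ m ih =>
      obtain ⟨ihB, ihD, ih3⟩ := ih
      have hgne : Nat.gcd (orderOf (c (4 + m + 1))) (fermatN (4 + m + 1)) ≠ 1 :=
        ConwayAux.rel2 hc0 hrec hnot (4 + m + 1)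
      have hglb : 2 ^ (4 + m + 1 + 2) + 1
          ≤ Nat.gcd (orderOf (c (4 + m + 1))) (fermatN (4 + m + 1)) :=
        ConwayAux.divisor_lb (by omega) (Nat.gcd_dvd_right _ _) hgne
      have he' := (ConwayAux.rel1 hc0 hrec hnot (4 + m + 1)).symm
      rw [ihD] at he'
      have h3' : ¬ 3 ∣ orderOf (c (4 + m + 1)) := by
        rw [he']
        intro hdvd
        rcases (Nat.Prime.dvd_mul h3p).mp hdvd with h | h
        · exact ih3 h
        · exact ConwayAux.three_not_dvd_fermatN (by omega)
            (h.trans (Nat.gcd_dvd_right _ _))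
      have hsplit : (∏ j ∈ Finset.Icc 5 (4 + m + 1), (2 ^ (j + 2) + 1))
          = (∏ j ∈ Finset.Icc 5 (4 + m), (2 ^ (j + 2) + 1)) * (2 ^ (4 + m + 1 + 2) + 1) :=
        Finset.prod_Icc_succ_top (by omega) _
      have hBnd : (∏ j ∈ Finset.Icc 1 4, fermatN j) *
          ∏ j ∈ Finset.Icc 5 (4 + m + 1), (2 ^ (j + 2) + 1)
          ≤ orderOf (c (4 + m + 1)) := by
        rw [hsplit, he', ← mul_assoc]
        exact Nat.mul_le_mul ihB hglb
      have hDnext : orderOf (ConwayAux.bb c (4 + m + 1 + 1)) = orderOf (c (4 + m + 1)) := by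
        rw [ConwayAux.rel3 hc0 hrec hnot (4 + m + 1),
          ConwayAux.gcd_eq_one hc0 hrec hnot h3', Nat.div_one]
      exact ⟨hBnd, hDnext, h3'⟩
  constructor
  · intro h2i h4i
    interval_cases i
    · exact ⟨by rw [he2, show (∏ j ∈ Finset.Icc 1 2, fermatN j) = 85 from by decide],
        by rw [hbb, hD3, show (∏ j ∈ Finset.Icc 1 2, fermatN j) = 85 from by decide]⟩
    · exact ⟨by rw [he3, show (∏ j ∈ Finset.Icc 1 3, fermatN j) = 21845 from by decide],
        by rw [hbb, hD4, show (∏ j ∈ Finset.Icc 1 3, fermatN j) = 21845 from by decide]⟩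
    · exact ⟨by rw [he4, show (∏ j ∈ Finset.Icc 1 4, fermatN j) = 1431655765 from by decide],
        by rw [hbb, hD5, show (∏ j ∈ Finset.Icc 1 4, fermatN j) = 1431655765 from by decide]⟩
  · intro h5i
    obtain ⟨m, rfl⟩ : ∃ m, i = 4 + m := ⟨i - 4, by omega⟩
    obtain ⟨hB, hD, -⟩ := hinv m
    exact ⟨hB, by rw [hbb, hD]; exact hB⟩
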